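/- Let G be a simple graph, u, t vertices, and S ⊆ N(u) a set such that removing S from G disconnects u from t, and such that every vertex of N(u) \ S can reach t in G \ (S ∪ {u}) only through vertices of S. Then no chordless u-t path of G starts with an edge uw for w ∈ N(u) \ S. -/

import Mathlib

open SimpleGraph

variable {V : Type*}

/-- `l` is a (simple) path in `G`, given as its list of vertices. -/
def IsPathL (G : SimpleGraph V) (l : List V) : Prop :=
  l.Chain' G.Adj ∧ l.Nodup

/-- `l` is an `s`-`t` path in `G`. -/
def IsStPathL (G : SimpleGraph V) (s t : V) (l : List V) : Prop :=
  IsPathL G l ∧ l.head? = some s ∧ l.getLast? = some t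

/-- No two non-consecutive vertices of `l` are adjacent in `G`. -/
def NoChord (G : SimpleGraph V) (l : List V) : Prop :=
  ∀ (i j : ℕ) (hi : i < l.length) (hj : j < l.length), i + 1 < j →
    ¬ G.Adj (l.get ⟨i, hi⟩) (l.get ⟨j, hj⟩)

/-- `l` is a chordless (induced) `s`-`t` path in `G`. -/
def IsChordlessStPathL (G : SimpleGraph V) (s t : V) (l : List V) : Prop :=
  IsStPathL G s t l ∧ NoChord G l

/-- `l` is a cycle in `G`: at least 3 distinct vertices, each cyclically consecutive pair
adjacent. -/
def IsCycleL (G : SimpleGraph V) (l : List V) : Prop :=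
  3 ≤ l.length ∧ l.Nodup ∧
    ∀ (i : ℕ) (hi : i < l.length),
      G.Adj (l.get ⟨i, hi⟩) (l.get ⟨(i + 1) % l.length, Nat.mod_lt _ (by omega)⟩)

/-- `l` is a chordless (induced) cycle in `G`: a cycle such that any two adjacent vertices on
it are cyclically consecutive. -/
def IsChordlessCycleL (G : SimpleGraph V) (l : List V) : Prop :=
  IsCycleL G l ∧
    ∀ (i j : ℕ) (hi : i < l.length) (hj : j < l.length),
      G.Adj (l.get ⟨i, hi⟩) (l.get ⟨j, hj⟩) →
        (i + 1) % l.length = j ∨ (j + 1) % l.length = i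

/-- The subgraph of `G` induced by the complement of `R` (vertices of `R` deleted), kept on
the same vertex type. -/
def delSet (G : SimpleGraph V) (R : Set V) : SimpleGraph V where
  Adj a b := G.Adj a b ∧ a ∉ R ∧ b ∉ R
  symm := ⟨fun _ _ ⟨h, ha, hb⟩ => ⟨h.symm, hb, ha⟩⟩
  loopless := ⟨fun _ ⟨h, _, _⟩ => G.irrefl h⟩

/-- Completeness half of the cleanup lemma: if `S ⊆ N(u)` disconnects `u` from `t`, and every
vertex of `N(u) \ S` can reach `t` in `G \ u` only through vertices of `S`, then no
chordless `u`-`t` path of `G` starts with an edge `uw` for `w ∈ N(u) \ S`. -/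
theorem stmt13 (G : SimpleGraph V) (u t : V) (S : Set V)
    (hS : S ⊆ G.neighborSet u)
    (hdisc : ¬ ∃ q : List V, IsStPathL (delSet G S) u t q)
    (hcut : ∀ w : V, G.Adj u w → w ∉ S →
      ∀ q : List V, IsStPathL (delSet G ({u} : Set V)) w t q → ∃ x ∈ S, x ∈ q) :
    ∀ w : V, G.Adj u w → w ∉ S →
      ¬ ∃ l : List V, IsChordlessStPathL G u t l ∧ l[1]? = some w := by
  rintro w huw hwS ⟨l, ⟨⟨⟨hchain, hnodup⟩, hhead, hlast⟩, hnc⟩, h1⟩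
  obtain ⟨l1, rfl⟩ : ∃ l1, l = u :: l1 := by
    cases l with
    | nil => simp at hhead
    | cons a l1 =>
      obtain rfl : a = u := by simpa using hhead
      exact ⟨l1, rfl⟩
  obtain ⟨l2, rfl⟩ : ∃ l2, l1 = w :: l2 := by
    cases l1 with
    | nil => simp at h1
    | cons b l2 =>
      obtain rfl : b = w := by simpa using h1
      exact ⟨l2, rfl⟩
  have hunotin : u ∉ w :: l2 := (List.nodup_cons.mp hnodup).1
  have hchain2 : (w :: l2).Chain' G.Adj := hchain.tail
  have hpath : IsStPathL (delSet G ({u} : Set V)) w t (w :: l2) := by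
    refine ⟨⟨?_, (List.nodup_cons.mp hnodup).2⟩, rfl, ?_⟩
    · simp only [List.Chain', List.isChain_iff_getElem] at hchain2 ⊢
      intro i hi
      refine ⟨hchain2 i hi, ?_, ?_⟩ <;> intro h <;>
        exact hunotin (Set.mem_singleton_iff.mp h ▸ List.getElem_mem _)
    · rwa [List.getLast?_cons_cons] at hlast
  obtain ⟨x, hxS, hxmem⟩ := hcut w huw hwS _ hpath
  have hxw : x ≠ w := fun h => hwS (h ▸ hxS)
  have hxl2 : x ∈ l2 := by
    rcases List.mem_cons.mp hxmem with h | h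
    · exact absurd h hxw
    · exact h
  obtain ⟨⟨k, hk⟩, hget⟩ := List.get_of_mem hxl2
  have hadj : G.Adj u x := hS hxS
  have hlen : k + 2 < (u :: w :: l2).length := by simp; omega
  have hk2 : (u :: w :: l2).get ⟨k + 2, hlen⟩ = x := hget
  exact hnc 0 (k + 2) (by simp) hlen (by omega) (by rw [hk2]; exact hadj)
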